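/- Kernel bound for complex arguments: let i ∈ Cl(p,q) with i² = -1, let z = a + jb with a, b ∈ ℝⁿ and j the complex imaginary unit, and set u(x,z) = u(x,a) - j u(x,b) with u(x,v) = Σ_l x_l v_l. Then |e^{-iu(x,z)}| ≤ (1 + |i|²)^{1/2} e^{|x||b|}, where e^{-iu(x,z)} = cos(u(x,z)) - i sin(u(x,z)) with cos and sin of a complex argument, and | · | is the modulus on ℂ ⊗ Cl(p,q) given by |M|² = Σ_A |M_A|². -/

import Mathlib

open MeasureTheory Finset Filter
noncomputable section

/-- Model of the real Clifford algebra `Cl(p,q)` (with `n = p + q`) as the space of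
coordinate functions on the canonical graded basis `{e_A : A ⊆ {1,…,n}}`. -/
abbrev Cl (n : ℕ) := Finset (Fin n) → ℝ

/-- The signature signs: `ε_k = 1` for `k < p`, `ε_k = -1` otherwise. -/
def eps (p : ℕ) {n : ℕ} (k : Fin n) : ℝ := if (k : ℕ) < p then 1 else -1

/-- The sign in `e_A e_B = clSign p A B • e_{A Δ B}`: reordering parity times signature signs. -/
def clSign (p : ℕ) {n : ℕ} (A B : Finset (Fin n)) : ℝ :=
  (-1 : ℝ) ^ ((A ×ˢ B).filter (fun ab => ab.2 < ab.1)).card * ∏ k ∈ A ∩ B, eps p k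

/-- The geometric (Clifford) product on `Cl(p,q)`. -/
def clMul (p : ℕ) {n : ℕ} (x y : Cl n) : Cl n :=
  fun C => ∑ A : Finset (Fin n), ∑ B : Finset (Fin n),
    if symmDiff A B = C then x A * y B * clSign p A B else 0

/-- The unit `1 = e_∅` of the Clifford algebra. -/
def clOne (n : ℕ) : Cl n := fun C => if C = ∅ then 1 else 0

/-- The principal reverse `α̃`. -/
def clRev (p : ℕ) {n : ℕ} (x : Cl n) : Cl n :=
  fun A => (-1 : ℝ) ^ (A.card * (A.card - 1) / 2) * (∏ k ∈ A, eps p k) * x A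

/-- Squared modulus `|M|² = Σ_A M_A²` of a multivector. -/
def modSq {n : ℕ} (M : Cl n) : ℝ := ∑ A : Finset (Fin n), M A ^ 2

/-- Modulus `|M|` of a multivector. -/
def clMod {n : ℕ} (M : Cl n) : ℝ := Real.sqrt (modSq M)

/-- `i` is a square root of `-1` in `Cl(p,q)`. -/
def isRoot (p : ℕ) {n : ℕ} (i : Cl n) : Prop := clMul p i i = - clOne n

/-- `u(x,w) = Σ_l x_l w_l`. -/
def uu {n : ℕ} (x w : Fin n → ℝ) : ℝ := ∑ l, x l * w l

/-- The kernel `e^{-i u(x,w)} = cos(u(x,w)) - sin(u(x,w)) i`. -/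
def kernelMinus {n : ℕ} (i : Cl n) (x w : Fin n → ℝ) : Cl n :=
  Real.cos (uu x w) • clOne n - Real.sin (uu x w) • i

/-- The kernel `e^{i u(x,w)} = cos(u(x,w)) + sin(u(x,w)) i`. -/
def kernelPlus {n : ℕ} (i : Cl n) (x w : Fin n → ℝ) : Cl n :=
  Real.cos (uu x w) • clOne n + Real.sin (uu x w) • i

/-- The Clifford–Fourier transform `𝓕^i{f}(w) = ∫ f(x) e^{-i u(x,w)} dⁿx`. -/
def cft (p : ℕ) {n : ℕ} (i : Cl n) (f : (Fin n → ℝ) → Cl n) (w : Fin n → ℝ) : Cl n :=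
  ∫ x : Fin n → ℝ, clMul p (f x) (kernelMinus i x w)

/-- Complexified modulus on `ℂ ⊗ Cl(p,q)`: `|M|² = Σ_A |M_A|²`. -/
def modC {n : ℕ} (M : Finset (Fin n) → ℂ) : ℝ :=
  Real.sqrt (∑ A : Finset (Fin n), ‖M A‖ ^ 2)

/-- Kernel bound for complex arguments: with `z = a + jb` and
`u(x,z) = u(x,a) - j u(x,b)`, `|e^{-iu(x,z)}| ≤ (1+|i|²)^{1/2} e^{|x||b|}`. -/
theorem kernel_bound_complex (p q : ℕ) (i : Cl (p + q)) (hi : isRoot p i)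
    (x a b : Fin (p + q) → ℝ) :
    modC (fun C =>
        Complex.cos ((uu x a : ℂ) - Complex.I * (uu x b : ℂ)) * (if C = ∅ then 1 else 0) -
        Complex.sin ((uu x a : ℂ) - Complex.I * (uu x b : ℂ)) * (i C : ℂ)) ≤
      Real.sqrt (1 + modSq i) *
        Real.exp (Real.sqrt (∑ l, x l ^ 2) * Real.sqrt (∑ l, b l ^ 2)) := by
  set α := uu x a with hαdef
  set β := uu x b with hβdef
  set E := Real.sqrt (∑ l, x l ^ 2) * Real.sqrt (∑ l, b l ^ 2) with hEdef
  have hE0 : 0 ≤ E := mul_nonneg (Real.sqrt_nonneg _) (Real.sqrt_nonneg _)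
  -- Cauchy–Schwarz
  have hcs : |β| ≤ E := by
    have h := Finset.sum_mul_sq_le_sq_mul_sq Finset.univ x b
    have h2 : Real.sqrt (β ^ 2) ≤ Real.sqrt ((∑ l, x l ^ 2) * ∑ l, b l ^ 2) :=
      Real.sqrt_le_sqrt h
    rwa [Real.sqrt_sq_eq_abs, Real.sqrt_mul (by positivity)] at h2
  have hcosh : Real.cosh β ≤ Real.exp E := by
    rw [Real.cosh_eq]
    have h1 : Real.exp β ≤ Real.exp E := Real.exp_le_exp.2 ((le_abs_self β).trans hcs)
    have h2 : Real.exp (-β) ≤ Real.exp E := Real.exp_le_exp.2 ((neg_le_abs β).trans hcs)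
    linarith
  have hcosh0 : 0 < Real.cosh β := Real.cosh_pos β
  have hsinh : Real.sinh β ^ 2 ≤ Real.exp E ^ 2 := by
    nlinarith [Real.cosh_sq β]
  have hcosh2 : Real.cosh β ^ 2 ≤ Real.exp E ^ 2 := by nlinarith
  -- explicit form of cos and sin
  have hcos : Complex.cos ((α:ℂ) - Complex.I * β) =
      (↑(Real.cos α * Real.cosh β) : ℂ) + ↑(Real.sin α * Real.sinh β) * Complex.I := by
    rw [mul_comm, Complex.cos_sub, Complex.cos_mul_I, Complex.sin_mul_I]
    push_cast [Complex.ofReal_cos, Complex.ofReal_sin, Complex.ofReal_cosh, Complex.ofReal_sinh]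
    ring
  have hsin : Complex.sin ((α:ℂ) - Complex.I * β) =
      (↑(Real.sin α * Real.cosh β) : ℂ) - ↑(Real.cos α * Real.sinh β) * Complex.I := by
    rw [mul_comm, Complex.sin_sub, Complex.cos_mul_I, Complex.sin_mul_I]
    push_cast [Complex.ofReal_cos, Complex.ofReal_sin, Complex.ofReal_cosh, Complex.ofReal_sinh]
    ring
  -- per-entry bound
  have hentry : ∀ C : Finset (Fin (p+q)),
      ‖Complex.cos ((α:ℂ) - Complex.I * β) * (if C = ∅ then 1 else 0) -
        Complex.sin ((α:ℂ) - Complex.I * β) * (i C : ℂ)‖ ^ 2 ≤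
      Real.exp E ^ 2 * ((if C = ∅ then (1:ℝ) else 0) ^ 2 + i C ^ 2) := by
    intro C
    set d : ℝ := if C = ∅ then (1:ℝ) else 0 with hd
    have hdc : (if C = ∅ then (1:ℂ) else 0) = (d : ℂ) := by
      by_cases h : C = ∅ <;> simp [hd, h]
    have hform : Complex.cos ((α:ℂ) - Complex.I * β) * (if C = ∅ then 1 else 0) -
        Complex.sin ((α:ℂ) - Complex.I * β) * (i C : ℂ) =
        (↑(Real.cosh β * (Real.cos α * d - Real.sin α * i C)) : ℂ) +
        ↑(Real.sinh β * (Real.sin α * d + Real.cos α * i C)) * Complex.I := by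
      rw [hdc, hcos, hsin]; push_cast; ring
    rw [hform, Complex.sq_norm, Complex.normSq_add_mul_I]
    have hA : (0:ℝ) ≤ (Real.cos α * d - Real.sin α * i C) ^ 2 := sq_nonneg _
    have hB : (0:ℝ) ≤ (Real.sin α * d + Real.cos α * i C) ^ 2 := sq_nonneg _
    have key : (Real.cos α * d - Real.sin α * i C) ^ 2 +
        (Real.sin α * d + Real.cos α * i C) ^ 2 = d ^ 2 + i C ^ 2 := by
      have := Real.sin_sq_add_cos_sq α
      nlinarith [this]
    calc (Real.cosh β * (Real.cos α * d - Real.sin α * i C)) ^ 2 +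
          (Real.sinh β * (Real.sin α * d + Real.cos α * i C)) ^ 2
        = Real.cosh β ^ 2 * (Real.cos α * d - Real.sin α * i C) ^ 2 +
          Real.sinh β ^ 2 * (Real.sin α * d + Real.cos α * i C) ^ 2 := by ring
      _ ≤ Real.exp E ^ 2 * (Real.cos α * d - Real.sin α * i C) ^ 2 +
          Real.exp E ^ 2 * (Real.sin α * d + Real.cos α * i C) ^ 2 := by
          gcongr <;> assumption
      _ = Real.exp E ^ 2 * ((Real.cos α * d - Real.sin α * i C) ^ 2 +
          (Real.sin α * d + Real.cos α * i C) ^ 2) := by ring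
      _ = Real.exp E ^ 2 * (d ^ 2 + i C ^ 2) := by rw [key]
  -- sum the bounds
  have hsum : (∑ C : Finset (Fin (p+q)),
      ‖Complex.cos ((α:ℂ) - Complex.I * β) * (if C = ∅ then 1 else 0) -
        Complex.sin ((α:ℂ) - Complex.I * β) * (i C : ℂ)‖ ^ 2) ≤
      (1 + modSq i) * Real.exp E ^ 2 := by
    calc (∑ C : Finset (Fin (p+q)),
        ‖Complex.cos ((α:ℂ) - Complex.I * β) * (if C = ∅ then 1 else 0) -
          Complex.sin ((α:ℂ) - Complex.I * β) * (i C : ℂ)‖ ^ 2)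
        ≤ ∑ C : Finset (Fin (p+q)),
            Real.exp E ^ 2 * ((if C = ∅ then (1:ℝ) else 0) ^ 2 + i C ^ 2) :=
          Finset.sum_le_sum fun C _ => hentry C
      _ = (1 + modSq i) * Real.exp E ^ 2 := by
          rw [← Finset.mul_sum, Finset.sum_add_distrib]
          simp [modSq, Finset.sum_ite_eq']
          ring
  unfold modC
  calc Real.sqrt (∑ C : Finset (Fin (p+q)),
      ‖Complex.cos ((α:ℂ) - Complex.I * β) * (if C = ∅ then 1 else 0) -
        Complex.sin ((α:ℂ) - Complex.I * β) * (i C : ℂ)‖ ^ 2)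
      ≤ Real.sqrt ((1 + modSq i) * Real.exp E ^ 2) := Real.sqrt_le_sqrt hsum
    _ = Real.sqrt (1 + modSq i) * Real.exp E := by
        have hm : 0 ≤ modSq i := Finset.sum_nonneg fun A _ => sq_nonneg _
        rw [Real.sqrt_mul (by linarith), Real.sqrt_sq (Real.exp_nonneg E)]
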